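/- Let T be a bounded self-adjoint operator with ‖T² - T‖ ≤ c < 1/8. Then the spectrum of T is contained in the union of the two intervals of radius 2c around 0 and around 1; in particular every z with |z-1| = 1/2 satisfies dist(z, σ(T)) ≥ 1/2 - 2c > 0. -/

import Mathlib

/-- Let `T` be a bounded self-adjoint operator with `‖T² - T‖ ≤ c < 1/8`. Then the
spectrum of `T` is contained in the union of the balls of radius `2c` around `0` and
around `1`; in particular every `z` with `|z-1| = 1/2` satisfies
`dist(z, σ(T)) ≥ 1/2 - 2c > 0`. -/
theorem spectrum_almost_projection
    {H : Type*} [NormedAddCommGroup H] [InnerProductSpace ℂ H] [CompleteSpace H]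
    (T : H →L[ℂ] H) (c : ℝ)
    (hT : IsSelfAdjoint T) (hc : ‖T * T - T‖ ≤ c) (hc' : c < 1 / 8) :
    (∀ μ ∈ spectrum ℂ T, ‖μ‖ ≤ 2 * c ∨ ‖μ - 1‖ ≤ 2 * c) ∧
      0 < 1 / 2 - 2 * c ∧
      ∀ z : ℂ, ‖z - 1‖ = 1 / 2 →
        ∀ μ ∈ spectrum ℂ T, 1 / 2 - 2 * c ≤ dist z μ := by
  have hc0 : 0 ≤ c := le_trans (norm_nonneg _) hc
  have key : ∀ μ ∈ spectrum ℂ T, ‖μ‖ ≤ 2 * c ∨ ‖μ - 1‖ ≤ 2 * c := by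
    intro μ hμ
    rcases subsingleton_or_nontrivial H with hH | hH
    · exact absurd hμ (by simp [spectrum, Set.eq_empty_iff_forall_notMem,
        isUnit_of_subsingleton])
    -- spectral mapping for the polynomial X^2 - X
    have hmem : μ ^ 2 - μ ∈ spectrum ℂ (T * T - T) := by
      have h0 : Polynomial.eval μ (Polynomial.X ^ 2 - Polynomial.X : Polynomial ℂ) ∈
          spectrum ℂ (Polynomial.aeval T (Polynomial.X ^ 2 - Polynomial.X : Polynomial ℂ)) :=
        spectrum.subset_polynomial_aeval T _ ⟨μ, hμ, rfl⟩
      simpa [sq, map_sub, map_pow, Polynomial.aeval_X] using h0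
    have hnorm : ‖μ ^ 2 - μ‖ ≤ c := le_trans (spectrum.norm_le_norm_of_mem hmem) hc
    have hfac : ‖μ‖ * ‖μ - 1‖ ≤ c := by
      have : μ ^ 2 - μ = μ * (μ - 1) := by ring
      rw [this] at hnorm
      simpa [norm_mul] using hnorm
    have hsum : (1 : ℝ) ≤ ‖μ‖ + ‖μ - 1‖ := by
      have := norm_sub_le μ (μ - 1)
      simpa using (by
        calc (1 : ℝ) = ‖μ - (μ - 1)‖ := by norm_num
        _ ≤ ‖μ‖ + ‖μ - 1‖ := norm_sub_le μ (μ - 1))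
    set a := ‖μ‖
    set b := ‖μ - 1‖
    have ha : 0 ≤ a := norm_nonneg _
    have hb : 0 ≤ b := norm_nonneg _
    rcases le_total a b with h | h
    · left; nlinarith
    · right; nlinarith
  refine ⟨key, by linarith, ?_⟩
  intro z hz μ hμ
  have hd : dist z μ = ‖z - μ‖ := by
    simp [Complex.dist_eq]
  rcases key μ hμ with h | h
  · have hz' : (1 : ℝ) - 1 / 2 ≤ ‖z‖ := by
      have := norm_sub_le z (z - 1)
      have h1 : ‖z - (z - 1)‖ = 1 := by norm_num
      have := norm_sub_norm_le z (z-1)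
      calc (1 : ℝ) - 1 / 2 = ‖z - (z - 1)‖ - ‖z - 1‖ := by
            rw [h1, hz]
        _ ≤ ‖z‖ := by
            have h3 : ‖z‖ - ‖z - 1‖ ≤ ‖z - (z - 1)‖ := norm_sub_norm_le _ _
            linarith
    have : ‖z‖ - ‖μ‖ ≤ ‖z - μ‖ := by
      have h3 : ‖z‖ - ‖μ‖ ≤ ‖z - μ‖ := norm_sub_norm_le _ _
      simpa using h3
    rw [hd]; linarith
  · have : ‖z - 1‖ - ‖μ - 1‖ ≤ ‖z - μ‖ := by
      have h2 : (z - 1) - (μ - 1) = z - μ := by ring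
      have h3 : ‖z - 1‖ - ‖μ - 1‖ ≤ ‖(z - 1) - (μ - 1)‖ := norm_sub_norm_le _ _
      rw [h2] at h3
      simpa using h3
    rw [hd]; linarith [hz ▸ this]
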